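/- Let n ≥ 1 and let g_1,…,g_n be real constants. Define Q : ℝ^n × ℝ^n → ℝ by Q(z,x) = exp( Σ_{i=1}^{n−1} ( e^{x_i − z_i} + g_i e^{z_{i+1} − x_i} ) + e^{x_n − z_n} + g_n e^{−x_n − z_n} ). Then for all z, x ∈ ℝ^n: −(1/2) Σ_{i=1}^{n} ∂²Q/∂z_i² + [ Σ_{i=1}^{n−1} g_i e^{z_{i+1} − z_i} + 2 g_n e^{−2 z_n} ] Q = −(1/2) Σ_{i=1}^{n} ∂²Q/∂x_i² + [ Σ_{i=1}^{n−1} g_i e^{x_{i+1} − x_i} + g_{n−1} g_n e^{−x_n − x_{n−1}} ] Q (for n = 1 the term g_{n−1} g_n e^{−x_n − x_{n−1}} is absent). That is, Q intertwines the quadratic Hamiltonians of the C_n and D_n open Toda chains. -/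

import Mathlib

open Real

/-- Second partial derivative of `f` in the `i`-th coordinate at `x`. -/
noncomputable def pd2 {k : ℕ} (f : (Fin k → ℝ) → ℝ) (i : Fin k) (x : Fin k → ℝ) : ℝ :=
  deriv (deriv (fun t : ℝ => f (Function.update x i t))) (x i)

/-- The elementary kernel intertwining the `C_n` and `D_n` open Toda
chains (`n = m + 1 ≥ 1`):
`Q(z,x) = exp( Σ_{i=1}^{n−1} ( e^{x_i − z_i} + g_i e^{z_{i+1} − x_i} ) + e^{x_n − z_n} + g_n e^{−x_n − z_n} )`. -/
noncomputable def Qker (m : ℕ) (g z x : Fin (m + 1) → ℝ) : ℝ :=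
  Real.exp ((∑ i : Fin m, (Real.exp (x i.castSucc - z i.castSucc)
        + g i.castSucc * Real.exp (z i.succ - x i.castSucc)))
    + Real.exp (x (Fin.last m) - z (Fin.last m))
    + g (Fin.last m) * Real.exp (-x (Fin.last m) - z (Fin.last m)))

noncomputable def Af (m : ℕ) (z x : Fin (m + 1) → ℝ) (i : Fin (m + 1)) : ℝ :=
  Real.exp (x i - z i)

noncomputable def Bf (m : ℕ) (g z x : Fin (m + 1) → ℝ) (j : Fin m) : ℝ :=
  g j.castSucc * Real.exp (z j.succ - x j.castSucc)

noncomputable def Cf (m : ℕ) (g z x : Fin (m + 1) → ℝ) : ℝ :=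
  g (Fin.last m) * Real.exp (-x (Fin.last m) - z (Fin.last m))

lemma deriv2_exp_form (a b c s : ℝ) :
    deriv (deriv (fun t : ℝ => Real.exp (a * Real.exp (-t) + b * Real.exp t + c))) s
      = ((b * Real.exp s - a * Real.exp (-s))^2 + (a * Real.exp (-s) + b * Real.exp s))
        * Real.exp (a * Real.exp (-s) + b * Real.exp s + c) := by
  have hinner : ∀ t : ℝ, HasDerivAt (fun t : ℝ => a * Real.exp (-t) + b * Real.exp t + c)
      (b * Real.exp t - a * Real.exp (-t)) t := by
    intro t
    have h1 : HasDerivAt (fun t : ℝ => -t) (-1) t := (hasDerivAt_id t).neg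
    have h2 : HasDerivAt (fun t : ℝ => Real.exp (-t)) (Real.exp (-t) * -1) t := h1.exp
    have h3 : HasDerivAt (fun t : ℝ => Real.exp t) (Real.exp t) t := Real.hasDerivAt_exp t
    have h4 := ((h2.const_mul a).add (h3.const_mul b)).add_const c
    exact h4.congr_deriv (by ring)
  have hf : ∀ t : ℝ, HasDerivAt (fun t => Real.exp (a * Real.exp (-t) + b * Real.exp t + c))
      (Real.exp (a * Real.exp (-t) + b * Real.exp t + c)
        * (b * Real.exp t - a * Real.exp (-t))) t :=
    fun t => (hinner t).exp
  have hd1 : deriv (fun t : ℝ => Real.exp (a * Real.exp (-t) + b * Real.exp t + c))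
      = fun t => Real.exp (a * Real.exp (-t) + b * Real.exp t + c)
        * (b * Real.exp t - a * Real.exp (-t)) :=
    funext fun t => (hf t).deriv
  rw [hd1]
  have h5 : HasDerivAt (fun t : ℝ => b * Real.exp t - a * Real.exp (-t))
      (b * Real.exp s + a * Real.exp (-s)) s := by
    have h1 : HasDerivAt (fun t : ℝ => -t) (-1) s := (hasDerivAt_id s).neg
    have h2 : HasDerivAt (fun t : ℝ => Real.exp (-t)) (Real.exp (-s) * -1) s := h1.exp
    have h3 : HasDerivAt (fun t : ℝ => Real.exp t) (Real.exp s) s := Real.hasDerivAt_exp s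
    have h4 := (h3.const_mul b).sub (h2.const_mul a)
    exact h4.congr_deriv (by ring)
  have h6 := ((hinner s).exp).mul h5
  erw [h6.deriv]
  ring

lemma pd2_exp_form {k : ℕ} (f : (Fin k → ℝ) → ℝ) (i : Fin k) (w : Fin k → ℝ) (a b c : ℝ)
    (h : ∀ t, f (Function.update w i t) = Real.exp (a * Real.exp (-t) + b * Real.exp t + c)) :
    pd2 f i w = ((b * Real.exp (w i) - a * Real.exp (-(w i)))^2
        + (a * Real.exp (-(w i)) + b * Real.exp (w i))) * f w := by
  have hw : f w = Real.exp (a * Real.exp (-(w i)) + b * Real.exp (w i) + c) := by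
    have h0 := h (w i); rwa [Function.update_eq_self] at h0
  unfold pd2
  rw [funext h, deriv2_exp_form, hw]

lemma uraw_eq (m : ℕ) (F : Fin (m + 1) → ℝ) (c : ℝ) (i : Fin (m + 1)) :
    (∑ j : Fin m, if j.castSucc = i then F j.castSucc else 0)
      + (if i = Fin.last m then F (Fin.last m) + c else 0)
    = F i + (if i = Fin.last m then c else 0) := by
  by_cases h : i = Fin.last m
  · subst h
    rw [Finset.sum_eq_zero (fun j _ => by simp [(Fin.castSucc_lt_last j).ne])]
    simp [add_assoc]
  · obtain ⟨k, rfl⟩ := Fin.exists_castSucc_eq.mpr h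
    simp only [Fin.castSucc_inj, if_neg h]
    rw [Finset.sum_ite_eq' Finset.univ k (fun j => F j.castSucc)]
    simp

lemma sraw_eq (m : ℕ) (F : Fin (m + 1) → ℝ) (i : Fin (m + 1)) :
    (∑ j : Fin m, if j.castSucc = i then F j.castSucc else 0)
      + (if i = Fin.last m then F (Fin.last m) else 0)
    = F i := by
  have h := uraw_eq m F 0 i
  simpa using h

lemma sum_succ_mul (m : ℕ) (B : Fin m → ℝ) (F : Fin (m + 1) → ℝ) :
    ∑ i : Fin (m + 1), (∑ j : Fin m, if j.succ = i then B j else 0) * F i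
      = ∑ j : Fin m, B j * F j.succ := by
  simp only [Finset.sum_mul, ite_mul, zero_mul]
  rw [Finset.sum_comm]
  refine Finset.sum_congr rfl fun j _ => ?_
  rw [Finset.sum_ite_eq Finset.univ j.succ (fun i => B j * F i)]
  simp

lemma sum_castSucc_mul (m : ℕ) (B : Fin m → ℝ) (F : Fin (m + 1) → ℝ) :
    ∑ i : Fin (m + 1), (∑ j : Fin m, if j.castSucc = i then B j else 0) * F i
      = ∑ j : Fin m, B j * F j.castSucc := by
  simp only [Finset.sum_mul, ite_mul, zero_mul]
  rw [Finset.sum_comm]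
  refine Finset.sum_congr rfl fun j _ => ?_
  rw [Finset.sum_ite_eq Finset.univ j.castSucc (fun i => B j * F i)]
  simp

lemma sum_last_mul (m : ℕ) (C : ℝ) (F : Fin (m + 1) → ℝ) :
    ∑ i : Fin (m + 1), (if i = Fin.last m then C else 0) * F i = C * F (Fin.last m) := by
  simp only [ite_mul, zero_mul]
  rw [Finset.sum_ite_eq' Finset.univ (Fin.last m) (fun i => C * F i)]
  simp

lemma sum_succ_id (m : ℕ) (B : Fin m → ℝ) :
    ∑ i : Fin (m + 1), (∑ j : Fin m, if j.succ = i then B j else 0) = ∑ j : Fin m, B j := by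
  have h := sum_succ_mul m B (fun _ => 1)
  simpa using h

lemma sum_castSucc_id (m : ℕ) (B : Fin m → ℝ) :
    ∑ i : Fin (m + 1), (∑ j : Fin m, if j.castSucc = i then B j else 0) = ∑ j : Fin m, B j := by
  have h := sum_castSucc_mul m B (fun _ => 1)
  simpa using h

lemma eval_succ (m : ℕ) (B : Fin m → ℝ) (k : Fin m) :
    (∑ j : Fin m, if j.succ = k.succ then B j else 0) = B k := by
  simp only [Fin.succ_inj]
  rw [Finset.sum_ite_eq' Finset.univ k B]; simp

lemma eval_castSucc (m : ℕ) (B : Fin m → ℝ) (k : Fin m) :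
    (∑ j : Fin m, if j.castSucc = k.castSucc then B j else 0) = B k := by
  simp only [Fin.castSucc_inj]
  rw [Finset.sum_ite_eq' Finset.univ k B]; simp

lemma castSucc_last_zero (m : ℕ) (B : Fin m → ℝ) :
    (∑ j : Fin m, if j.castSucc = Fin.last m then B j else 0) = 0 :=
  Finset.sum_eq_zero fun j _ => by simp [(Fin.castSucc_lt_last j).ne]

lemma eval_succ_last (m : ℕ) (B : Fin m → ℝ) :
    (∑ j : Fin m, if j.succ = Fin.last m then B j else 0)
      = if h : 0 < m then B ⟨m - 1, by omega⟩ else 0 := by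
  by_cases h : 0 < m
  · rw [dif_pos h]
    have hiff : ∀ j : Fin m, (j.succ = Fin.last m) ↔ j = ⟨m - 1, by omega⟩ := by
      intro j
      rw [Fin.ext_iff, Fin.ext_iff]
      simp only [Fin.val_succ, Fin.val_last]
      omega
    simp only [hiff]
    rw [Finset.sum_ite_eq' Finset.univ ⟨m - 1, by omega⟩ B]; simp
  · rw [dif_neg h]
    have : m = 0 := by omega
    subst this
    simp

lemma scalar_key (m : ℕ) (A : Fin (m + 1) → ℝ) (B : Fin m → ℝ) (C : ℝ) :
    (∑ i : Fin (m + 1),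
        (((∑ j : Fin m, if j.succ = i then B j else 0)
            - (A i + if i = Fin.last m then C else 0))^2
          + ((A i + if i = Fin.last m then C else 0)
            + ∑ j : Fin m, if j.succ = i then B j else 0)))
    - (∑ i : Fin (m + 1),
        ((A i - ((∑ j : Fin m, if j.castSucc = i then B j else 0)
            + if i = Fin.last m then C else 0))^2
          + (A i + ((∑ j : Fin m, if j.castSucc = i then B j else 0)
            + if i = Fin.last m then C else 0))))
    = 2 * (∑ j : Fin m, B j * A j.castSucc) + 4 * (C * A (Fin.last m))
      - 2 * (∑ j : Fin m, B j * A j.succ)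
      - 2 * (C * ∑ j : Fin m, if j.succ = Fin.last m then B j else 0) := by
  rw [← Finset.sum_sub_distrib]
  have hper : ∀ i ∈ Finset.univ, ((((∑ j : Fin m, if j.succ = i then B j else 0)
            - (A i + if i = Fin.last m then C else 0))^2
          + ((A i + if i = Fin.last m then C else 0)
            + ∑ j : Fin m, if j.succ = i then B j else 0))
        - ((A i - ((∑ j : Fin m, if j.castSucc = i then B j else 0)
            + if i = Fin.last m then C else 0))^2
          + (A i + ((∑ j : Fin m, if j.castSucc = i then B j else 0)
            + if i = Fin.last m then C else 0))))
      = ((∑ j : Fin m, if j.succ = i then B j else 0)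
            * (∑ j : Fin m, if j.succ = i then B j else 0)
          - (∑ j : Fin m, if j.castSucc = i then B j else 0)
            * (∑ j : Fin m, if j.castSucc = i then B j else 0)
          - 2 * ((∑ j : Fin m, if j.succ = i then B j else 0) * A i)
          + 2 * ((∑ j : Fin m, if j.castSucc = i then B j else 0) * A i)
          - 2 * ((if i = Fin.last m then C else 0)
              * (∑ j : Fin m, if j.succ = i then B j else 0))
          - 2 * ((if i = Fin.last m then C else 0)
              * (∑ j : Fin m, if j.castSucc = i then B j else 0))
          + 4 * ((if i = Fin.last m then C else 0) * A i))
        + ((∑ j : Fin m, if j.succ = i then B j else 0)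
          - (∑ j : Fin m, if j.castSucc = i then B j else 0)) := by
    intro i _
    ring
  rw [Finset.sum_congr rfl hper]
  simp only [Finset.sum_add_distrib, Finset.sum_sub_distrib, ← Finset.mul_sum]
  rw [sum_succ_mul m B (fun i => ∑ j : Fin m, if j.succ = i then B j else 0),
    sum_castSucc_mul m B (fun i => ∑ j : Fin m, if j.castSucc = i then B j else 0),
    sum_succ_mul m B A, sum_castSucc_mul m B A,
    sum_last_mul m C (fun i => ∑ j : Fin m, if j.succ = i then B j else 0),
    sum_last_mul m C (fun i => ∑ j : Fin m, if j.castSucc = i then B j else 0),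
    sum_last_mul m C A, sum_succ_id, sum_castSucc_id, castSucc_last_zero]
  simp only [eval_succ, eval_castSucc]
  ring

lemma pd2_z (m : ℕ) (g z x : Fin (m + 1) → ℝ) (i : Fin (m + 1)) :
    pd2 (fun u => Qker m g u x) i z
      = (((∑ j : Fin m, if j.succ = i then Bf m g z x j else 0)
            - (Af m z x i + if i = Fin.last m then Cf m g z x else 0))^2
          + ((Af m z x i + if i = Fin.last m then Cf m g z x else 0)
            + ∑ j : Fin m, if j.succ = i then Bf m g z x j else 0)) * Qker m g z x := by
  have hform : ∀ t, Qker m g (Function.update z i t) x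
      = Real.exp
          (((Af m z x i + if i = Fin.last m then Cf m g z x else 0) * Real.exp (z i))
              * Real.exp (-t)
            + ((∑ j : Fin m, if j.succ = i then Bf m g z x j else 0) * Real.exp (-(z i)))
              * Real.exp t
            + (((∑ j : Fin m, (Af m z x j.castSucc + Bf m g z x j))
                  + Af m z x (Fin.last m) + Cf m g z x)
                - (Af m z x i + if i = Fin.last m then Cf m g z x else 0)
                - ∑ j : Fin m, if j.succ = i then Bf m g z x j else 0)) := by
    intro t
    unfold Qker
    simp only [Function.update_apply]
    congr 1
    have hterm : ∀ j : Fin m,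
        Real.exp (x j.castSucc - if j.castSucc = i then t else z j.castSucc)
          + g j.castSucc * Real.exp ((if j.succ = i then t else z j.succ) - x j.castSucc)
        = (Af m z x j.castSucc + Bf m g z x j)
          + (if j.castSucc = i then Af m z x j.castSucc else 0)
            * (Real.exp (z i) * Real.exp (-t) - 1)
          + (if j.succ = i then Bf m g z x j else 0)
            * (Real.exp (-(z i)) * Real.exp t - 1) := by
      intro j
      have hne : ¬(j.castSucc = i ∧ j.succ = i) := by
        rintro ⟨h1, h2⟩
        exact (Fin.castSucc_lt_succ (i := j)).ne (h1.trans h2.symm)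
      by_cases h1 : j.castSucc = i
      · have h2 : ¬ j.succ = i := fun h2 => hne ⟨h1, h2⟩
        rw [if_pos h1, if_neg h2, if_pos h1, if_neg h2, ← h1]
        simp only [Af, Bf, Real.exp_sub, Real.exp_neg]
        field_simp
        ring
      · rw [if_neg h1, if_neg h1]
        by_cases h2 : j.succ = i
        · rw [if_pos h2, if_pos h2, ← h2]
          simp only [Af, Bf, Real.exp_sub, Real.exp_neg]
          field_simp
          ring
        · rw [if_neg h2, if_neg h2]
          simp [Af, Bf]
    have hlast :
        Real.exp (x (Fin.last m) - if Fin.last m = i then t else z (Fin.last m))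
          + g (Fin.last m)
            * Real.exp (-x (Fin.last m) - if Fin.last m = i then t else z (Fin.last m))
        = (Af m z x (Fin.last m) + Cf m g z x)
          + (if i = Fin.last m then Af m z x (Fin.last m) + Cf m g z x else 0)
            * (Real.exp (z i) * Real.exp (-t) - 1) := by
      by_cases h : Fin.last m = i
      · rw [if_pos h, if_pos h.symm, ← h]
        simp only [Af, Cf, Real.exp_sub, Real.exp_neg]
        field_simp
        ring
      · rw [if_neg h, if_neg (fun h' => h h'.symm)]
        simp [Af, Cf]
    rw [Finset.sum_congr rfl (fun j _ => hterm j), add_assoc, hlast]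
    rw [Finset.sum_add_distrib, Finset.sum_add_distrib, ← Finset.sum_mul, ← Finset.sum_mul]
    linear_combination (Real.exp (z i) * Real.exp (-t) - 1)
      * (uraw_eq m (Af m z x) (Cf m g z x) i)
  rw [pd2_exp_form (fun u => Qker m g u x) i z _ _ _ hform]
  have e1 : ((∑ j : Fin m, if j.succ = i then Bf m g z x j else 0) * Real.exp (-(z i)))
      * Real.exp (z i) = ∑ j : Fin m, if j.succ = i then Bf m g z x j else 0 := by
    rw [mul_assoc, ← Real.exp_add]; simp
  have e2 : ((Af m z x i + if i = Fin.last m then Cf m g z x else 0) * Real.exp (z i))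
      * Real.exp (-(z i)) = Af m z x i + if i = Fin.last m then Cf m g z x else 0 := by
    rw [mul_assoc, ← Real.exp_add]; simp
  rw [e1, e2]

lemma pd2_x (m : ℕ) (g z x : Fin (m + 1) → ℝ) (i : Fin (m + 1)) :
    pd2 (fun v => Qker m g z v) i x
      = ((Af m z x i - ((∑ j : Fin m, if j.castSucc = i then Bf m g z x j else 0)
            + if i = Fin.last m then Cf m g z x else 0))^2
          + (Af m z x i + ((∑ j : Fin m, if j.castSucc = i then Bf m g z x j else 0)
            + if i = Fin.last m then Cf m g z x else 0))) * Qker m g z x := by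
  have hform : ∀ t, Qker m g z (Function.update x i t)
      = Real.exp
          ((((∑ j : Fin m, if j.castSucc = i then Bf m g z x j else 0)
                + if i = Fin.last m then Cf m g z x else 0) * Real.exp (x i))
              * Real.exp (-t)
            + (Af m z x i * Real.exp (-(x i))) * Real.exp t
            + (((∑ j : Fin m, (Af m z x j.castSucc + Bf m g z x j))
                  + Af m z x (Fin.last m) + Cf m g z x)
                - ((∑ j : Fin m, if j.castSucc = i then Bf m g z x j else 0)
                    + if i = Fin.last m then Cf m g z x else 0)
                - Af m z x i)) := by
    intro t
    unfold Qker
    simp only [Function.update_apply]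
    congr 1
    have hterm : ∀ j : Fin m,
        Real.exp ((if j.castSucc = i then t else x j.castSucc) - z j.castSucc)
          + g j.castSucc * Real.exp (z j.succ - if j.castSucc = i then t else x j.castSucc)
        = (Af m z x j.castSucc + Bf m g z x j)
          + (if j.castSucc = i then Af m z x j.castSucc else 0)
            * (Real.exp (-(x i)) * Real.exp t - 1)
          + (if j.castSucc = i then Bf m g z x j else 0)
            * (Real.exp (x i) * Real.exp (-t) - 1) := by
      intro j
      by_cases h1 : j.castSucc = i
      · rw [if_pos h1, ← h1]
        simp only [Af, Bf, Real.exp_sub, Real.exp_neg, if_true]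
        field_simp
        ring
      · rw [if_neg h1]
        simp [Af, Bf, h1]
    have hlast :
        Real.exp ((if Fin.last m = i then t else x (Fin.last m)) - z (Fin.last m))
          + g (Fin.last m)
            * Real.exp (-(if Fin.last m = i then t else x (Fin.last m)) - z (Fin.last m))
        = (Af m z x (Fin.last m) + Cf m g z x)
          + (if i = Fin.last m then Af m z x (Fin.last m) else 0)
            * (Real.exp (-(x i)) * Real.exp t - 1)
          + (if i = Fin.last m then Cf m g z x else 0)
            * (Real.exp (x i) * Real.exp (-t) - 1) := by
      by_cases h : Fin.last m = i
      · rw [if_pos h, if_pos h.symm, if_pos h.symm, ← h]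
        simp only [Af, Cf, Real.exp_sub, Real.exp_neg]
        field_simp
        ring
      · rw [if_neg h, if_neg (fun h' => h h'.symm), if_neg (fun h' => h h'.symm)]
        simp [Af, Cf]
    rw [Finset.sum_congr rfl (fun j _ => hterm j), add_assoc, hlast]
    rw [Finset.sum_add_distrib, Finset.sum_add_distrib, ← Finset.sum_mul, ← Finset.sum_mul]
    linear_combination (Real.exp (-(x i)) * Real.exp t - 1) * (sraw_eq m (Af m z x) i)
  rw [pd2_exp_form (fun v => Qker m g z v) i x _ _ _ hform]
  have e1 : (Af m z x i * Real.exp (-(x i))) * Real.exp (x i) = Af m z x i := by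
    rw [mul_assoc, ← Real.exp_add]; simp
  have e2 : (((∑ j : Fin m, if j.castSucc = i then Bf m g z x j else 0)
        + if i = Fin.last m then Cf m g z x else 0) * Real.exp (x i)) * Real.exp (-(x i))
      = (∑ j : Fin m, if j.castSucc = i then Bf m g z x j else 0)
        + if i = Fin.last m then Cf m g z x else 0 := by
    rw [mul_assoc, ← Real.exp_add]; simp
  rw [e1, e2]
  ring

set_option maxHeartbeats 1000000 in
/-- The kernel `Q` intertwines the quadratic Hamiltonians of the `C_n` and
`D_n` open Toda chains, `n = m + 1 ≥ 1` (for `n = 1` the term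
`g_{n−1} g_n e^{−x_n − x_{n−1}}` is absent). -/
theorem C_D_intertwining (m : ℕ) (g : Fin (m + 1) → ℝ)
    (z x : Fin (m + 1) → ℝ) :
    -(1/2) * (∑ i : Fin (m + 1), pd2 (fun u => Qker m g u x) i z)
      + ((∑ i : Fin m, g i.castSucc * Real.exp (z i.succ - z i.castSucc))
          + 2 * g (Fin.last m) * Real.exp (-(2 * z (Fin.last m)))) * Qker m g z x
    = -(1/2) * (∑ i : Fin (m + 1), pd2 (fun v => Qker m g z v) i x)
      + ((∑ i : Fin m, g i.castSucc * Real.exp (x i.succ - x i.castSucc))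
          + (if h : 0 < m then
              g ⟨m - 1, by omega⟩ * g (Fin.last m)
                * Real.exp (-x (Fin.last m) - x ⟨m - 1, by omega⟩) else 0)) * Qker m g z x := by
  have e1 : ∑ j : Fin m, Bf m g z x j * Af m z x j.castSucc
      = ∑ j : Fin m, g j.castSucc * Real.exp (z j.succ - z j.castSucc) := by
    refine Finset.sum_congr rfl fun j _ => ?_
    simp only [Af, Bf]
    rw [mul_assoc, ← Real.exp_add]
    congr 1
    ring
  have e2 : ∑ j : Fin m, Bf m g z x j * Af m z x j.succ
      = ∑ j : Fin m, g j.castSucc * Real.exp (x j.succ - x j.castSucc) := by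
    refine Finset.sum_congr rfl fun j _ => ?_
    simp only [Af, Bf]
    rw [mul_assoc, ← Real.exp_add]
    congr 1
    ring
  have e3 : Cf m g z x * Af m z x (Fin.last m)
      = g (Fin.last m) * Real.exp (-(2 * z (Fin.last m))) := by
    simp only [Af, Cf]
    rw [mul_assoc, ← Real.exp_add]
    congr 1
    ring
  have e4 : Cf m g z x * (∑ j : Fin m, if j.succ = Fin.last m then Bf m g z x j else 0)
      = (if h : 0 < m then
          g ⟨m - 1, by omega⟩ * g (Fin.last m)
            * Real.exp (-x (Fin.last m) - x ⟨m - 1, by omega⟩) else 0) := by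
    rw [eval_succ_last m (Bf m g z x)]
    by_cases h : 0 < m
    · rw [dif_pos h, dif_pos h]
      simp only [Bf, Cf]
      have hc : ((⟨m - 1, by omega⟩ : Fin m).castSucc : Fin (m + 1))
          = ⟨m - 1, by omega⟩ := rfl
      have hs : (⟨m - 1, by omega⟩ : Fin m).succ = Fin.last m := by
        rw [Fin.ext_iff]
        simp only [Fin.val_succ, Fin.val_last]
        omega
      rw [hc, hs]
      have hexp : Real.exp (-x (Fin.last m) - z (Fin.last m))
            * Real.exp (z (Fin.last m) - x (⟨m - 1, by omega⟩ : Fin (m + 1)))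
          = Real.exp (-x (Fin.last m) - x (⟨m - 1, by omega⟩ : Fin (m + 1))) := by
        rw [← Real.exp_add]
        congr 1
        ring
      linear_combination (g (Fin.last m)
        * g (⟨m - 1, by omega⟩ : Fin (m + 1))) * hexp
    · rw [dif_neg h, dif_neg h, mul_zero]
  have hk := scalar_key m (Af m z x) (Bf m g z x) (Cf m g z x)
  rw [e1, e2, e3, e4] at hk
  simp only [pd2_z, pd2_x]
  rw [← Finset.sum_mul, ← Finset.sum_mul]
  linear_combination ((-(1 : ℝ)/2) * Qker m g z x) * hk
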